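/- Let p be a nonzero Laurent polynomial in z₁,…,z_d over ℂ with lowest degree component h, and assume the Laurent polynomials h(μ_n⊙z), n ∈ W, are pairwise distinct (Assumption A₂). Then for all n ≠ n' in W, the polynomials r_n(z,λ̃) = λ̃ z₁^{γ₁'}⋯z_d^{γ_d'} h(μ_n⊙z) − z₁^{γ₁'}⋯z_d^{γ_d'} and r_{n'}(z,λ̃) = λ̃ z₁^{γ₁'}⋯z_d^{γ_d'} h(μ_{n'}⊙z) − z₁^{γ₁'}⋯z_d^{γ_d'} are relatively prime in ℂ[z₁,…,z_d,λ̃], i.e. they have no common non-constant polynomial factor. -/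

import Mathlib

open scoped BigOperators
open Complex

noncomputable section

/-- Laurent polynomials in `z₁,…,z_d` over `ℂ`, encoded as the group algebra of `ℤ^d`. -/
abbrev LMv (d : ℕ) : Type := AddMonoidAlgebra ℂ (Fin d →₀ ℤ)

/-- Laurent polynomials in `z₁,…,z_d` and `λ` over `ℂ`. -/
abbrev LMvF (d : ℕ) : Type := AddMonoidAlgebra ℂ ((Fin d →₀ ℤ) × ℤ)

/-- `e^{2πin/q}`. -/
def muC (q : ℕ) (n : ℤ) : ℂ := Complex.exp (2 * Real.pi * Complex.I * n / q)

/-- The vector `μ_n = (e^{2πin₁/q₁},…,e^{2πin_d/q_d})`. -/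
def muV {d : ℕ} (q : Fin d → ℕ) (n : Fin d → ℤ) : Fin d → ℂ := fun j => muC (q j) (n j)

/-- Substitution `z_j ↦ c_j z_j` in a Laurent polynomial in `z`. -/
def scaleZ {d : ℕ} (c : Fin d → ℂ) (p : LMv d) : LMv d :=
  AddMonoidAlgebra.ofCoeff (Finsupp.sum p.coeff fun α a => Finsupp.single α ((∏ j, c j ^ (α j)) * a))

/-- Substitution `z_j ↦ c_j z_j` in a Laurent polynomial in `(z, λ)` (leaving `λ` alone). -/
def scaleZF {d : ℕ} (c : Fin d → ℂ) (P : LMvF d) : LMvF d :=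
  AddMonoidAlgebra.ofCoeff (Finsupp.sum P.coeff fun β a => Finsupp.single β ((∏ j, c j ^ (β.1 j)) * a))

/-- Total degree `α₁ + ⋯ + α_d` of a monomial exponent. -/
def degS {d : ℕ} (α : Fin d →₀ ℤ) : ℤ := ∑ j, α j

/-- `L₋`, the minimal total degree of a (nonzero) Laurent polynomial. -/
def lowDeg {d : ℕ} (p : LMv d) : ℤ := ((Finsupp.support p.coeff).image degS).min.untopD 0

/-- The lowest degree component of a Laurent polynomial. -/
def lowComp {d : ℕ} (p : LMv d) : LMv d :=
  AddMonoidAlgebra.ofCoeff (Finsupp.filter (fun α => degS α = lowDeg p) p.coeff)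

/-- The fundamental cell `W = {n ∈ ℤ^d : 0 ≤ n_j ≤ q_j - 1}`. -/
def Wcell {d : ℕ} (q : Fin d → ℕ) : Finset (Fin d → ℤ) :=
  Fintype.piFinset fun j => (Finset.range (q j)).image (fun k : ℕ => (k : ℤ))

/-- The canonical embedding of Laurent polynomials in `z` into Laurent polynomials in `(z,λ)`. -/
def embedZ {d : ℕ} (p : LMv d) : LMvF d := AddMonoidAlgebra.ofCoeff (Finsupp.mapDomain (fun α => (α, (0:ℤ))) p.coeff)

/-- The variable `λ`. -/
def lamF (d : ℕ) : LMvF d := AddMonoidAlgebra.ofCoeff (Finsupp.single ((0 : Fin d →₀ ℤ), (1:ℤ)) (1:ℂ))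

/-- Exponent stretching `α ↦ (q₁α₁,…,q_dα_d)`. -/
def stretchE {d : ℕ} (q : Fin d → ℕ) (α : Fin d →₀ ℤ) : Fin d →₀ ℤ :=
  Finsupp.sum α fun j a => Finsupp.single j ((q j : ℤ) * a)

/-- The substitution `𝒫(w,λ) ↦ 𝒫(z₁^{q₁},…,z_d^{q_d},λ)`. -/
def stretchF {d : ℕ} (q : Fin d → ℕ) (P : LMvF d) : LMvF d :=
  AddMonoidAlgebra.ofCoeff (Finsupp.mapDomain (fun β => (stretchE q β.1, β.2)) P.coeff)

/-- Assumption (A₂): the Laurent polynomials `h(μ_n ⊙ z)`, `n ∈ W`, are pairwise distinct. -/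
def PairwiseDistinctH {d : ℕ} (q : Fin d → ℕ) (h : LMv d) : Prop :=
  ∀ n ∈ Wcell q, ∀ n' ∈ Wcell q, n ≠ n' → scaleZ (muV q n) h ≠ scaleZ (muV q n') h

/-- The polynomial `𝒫̃(z,λ) = ∏_{n∈W}(p(μ_n⊙z) − λ) + Σ_{X∈𝒮} C_X ∏_{n∈X}(p(μ_n⊙z) − λ)`. -/
def Ptilde {d : ℕ} (q : Fin d → ℕ) (p : LMv d)
    (S : Finset (Finset (Fin d → ℤ))) (C : Finset (Fin d → ℤ) → ℂ) : LMvF d :=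
  (∏ n ∈ Wcell q, (embedZ (scaleZ (muV q n) p) - lamF d))
    + ∑ X ∈ S, C X • ∏ n ∈ X, (embedZ (scaleZ (muV q n) p) - lamF d)
/-- The symbol `p(z) = Σ_n a_n z^{-n}` of a finite-range Toeplitz operator. -/
def symbA {d : ℕ} (a : (Fin d → ℤ) →₀ ℂ) : LMv d :=
  AddMonoidAlgebra.ofCoeff (Finsupp.sum a fun n c => Finsupp.single (-(Finsupp.equivFunOnFinite.symm n)) c)

/-- `V` is `q`-periodic. -/
def IsPeriodic {d : ℕ} (q : Fin d → ℕ) (V : (Fin d → ℤ) → ℂ) : Prop :=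
  ∀ (n : Fin d → ℤ) (j : Fin d), V (n + (q j : ℤ) • Pi.single j 1) = V n

/-- The discrete Fourier transform `V̂_ℓ = Q^{-1/2} Σ_{m∈W} e^{-2πi⟨m,ℓ⟩} V_m`. -/
def Vhat {d : ℕ} (q : Fin d → ℕ) (V : (Fin d → ℤ) → ℂ) (l : Fin d → ℝ) : ℂ :=
  ((1 / Real.sqrt (∏ j, (q j : ℝ)) : ℝ) : ℂ) *
    ∑ m ∈ Wcell q, Complex.exp (-(2 * Real.pi * Complex.I) *
      ((∑ j, (m j : ℝ) * l j : ℝ) : ℂ)) * V m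

/-- The diagonal matrix `D^z` with entries `p(μ_n ⊙ z)`, as Laurent polynomials. -/
def Dmat {d : ℕ} (q : Fin d → ℕ) (p : LMv d) :
    Matrix {n // n ∈ Wcell q} {n // n ∈ Wcell q} (LMvF d) :=
  Matrix.diagonal fun n => embedZ (scaleZ (muV q n.1) p)

/-- The constant matrix `B` with entries `V̂((n-n')/q)`. -/
def Bmat {d : ℕ} (q : Fin d → ℕ) (V : (Fin d → ℤ) → ℂ) :
    Matrix {n // n ∈ Wcell q} {n // n ∈ Wcell q} (LMvF d) :=
  fun n n' => AddMonoidAlgebra.ofCoeff (Finsupp.single ((0 : Fin d →₀ ℤ), (0:ℤ))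
    (Vhat q V fun j => ((n.1 j - n'.1 j : ℤ) : ℝ) / (q j : ℝ)))

/-- `det(D^z + B - λI)`, a Laurent polynomial in `z` and `λ`. -/
def detLaur {d : ℕ} (q : Fin d → ℕ) (p : LMv d) (V : (Fin d → ℤ) → ℂ) : LMvF d :=
  Matrix.det (Dmat q p + Bmat q V - Matrix.diagonal fun _ => lamF d)
/-- Ordinary polynomials in `z₁,…,z_d` and `λ̃` (the extra `Unit` variable is `λ̃`). -/
abbrev MvP (d : ℕ) : Type := MvPolynomial (Fin d ⊕ Unit) ℂ

/-- Conversion of a Laurent polynomial in `(z,λ)` with nonnegative exponents into an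
ordinary polynomial in `ℂ[z₁,…,z_d,λ̃]` (negative exponents are truncated). -/
def toMvP {d : ℕ} (P : LMvF d) : MvP d :=
  Finsupp.sum P.coeff fun β c =>
    MvPolynomial.monomial
      (Finsupp.equivFunOnFinite.symm
        (Sum.elim (fun j => (β.1 j).toNat) (fun _ => β.2.toNat))) c

/-- `γ_j(p)`: minus the lowest exponent of `z_j` in `p` if that exponent is negative,
and `0` otherwise. -/
def gammaV {d : ℕ} (p : LMv d) (j : Fin d) : ℤ :=
  max 0 (-(((Finsupp.support p.coeff).image fun α => α j).min.untopD 0))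

/-- The exponent vector `γ' = (γ₁',…,γ_d')` computed from the lowest degree component of `p`. -/
def gammaE' {d : ℕ} (p : LMv d) : Fin d →₀ ℤ :=
  Finsupp.equivFunOnFinite.symm fun j => gammaV (lowComp p) j

/-- The polynomial `r_n(z,λ̃) = λ̃ z^{γ'} h(μ_n⊙z) − z^{γ'} ∈ ℂ[z,λ̃]`. -/
def rPoly {d : ℕ} (q : Fin d → ℕ) (p : LMv d) (n : Fin d → ℤ) : MvP d :=
  MvPolynomial.X (Sum.inr ()) *
      toMvP ((AddMonoidAlgebra.single (gammaE' p, (0:ℤ)) (1:ℂ) : LMvF d) * embedZ (scaleZ (muV q n) (lowComp p)))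
    - toMvP (AddMonoidAlgebra.ofCoeff (Finsupp.single (gammaE' p, (0:ℤ)) (1:ℂ)))

/-- Substitution `w_j ↦ z_j^{q_j}` (fixing `λ̃`) on ordinary polynomials. -/
def stretchMv {d : ℕ} (q : Fin d → ℕ) : MvP d →ₐ[ℂ] MvP d :=
  MvPolynomial.aeval
    (Sum.elim (fun j => MvPolynomial.X (Sum.inl j) ^ q j)
      (fun _ => MvPolynomial.X (Sum.inr ())))

/-- Substitution `z_j ↦ c_j z_j` (fixing `λ̃`) on ordinary polynomials. -/
def scaleMv {d : ℕ} (c : Fin d → ℂ) : MvP d →ₐ[ℂ] MvP d :=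
  MvPolynomial.aeval
    (Sum.elim (fun j => MvPolynomial.C (c j) * MvPolynomial.X (Sum.inl j))
      (fun _ => MvPolynomial.X (Sum.inr ())))

/-- `ã(z,λ̃) = ∏_{n∈W} r_n(z,λ̃)`. -/
def atilde {d : ℕ} (q : Fin d → ℕ) (p : LMv d) : MvP d := ∏ n ∈ Wcell q, rPoly q p n

/-- Substitution `λ ↦ λ̃⁻¹` on Laurent polynomials in `(z,λ)`. -/
def invLam {d : ℕ} (P : LMvF d) : LMvF d :=
  AddMonoidAlgebra.ofCoeff (Finsupp.mapDomain (fun β : (Fin d →₀ ℤ) × ℤ => (β.1, -β.2)) P.coeff)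

/-- The exponent vector `(γ₁ Q/q₁, …, γ_d Q/q_d)` computed from `p`. -/
def gammaQE {d : ℕ} (q : Fin d → ℕ) (p : LMv d) : Fin d →₀ ℤ :=
  Finsupp.equivFunOnFinite.symm fun j => gammaV p j * (((∏ i, q i) / q j : ℕ) : ℤ)

/-- `ℛ(w,λ̃) = λ̃^Q w₁^{γ₁Q/q₁}⋯w_d^{γ_dQ/q_d} 𝒫(w,λ̃⁻¹)`. -/
def Rcal {d : ℕ} (q : Fin d → ℕ) (p : LMv d) (P : LMvF d) : LMvF d :=
  (AddMonoidAlgebra.single (gammaQE q p, ((∏ j, q j : ℕ) : ℤ)) (1:ℂ) : LMvF d) * invLam P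
/-- Reduction of `v ∈ ℤ^d` modulo the lattice `q₁ℤ ⊕ ⋯ ⊕ q_dℤ` into `W`. -/
def modW {d : ℕ} (q : Fin d → ℕ) (hq : ∀ j, 1 ≤ q j) (v : Fin d → ℤ) :
    {x // x ∈ Wcell q} :=
  ⟨fun j => v j % (q j : ℤ), by
    simp only [Wcell, Fintype.mem_piFinset, Finset.mem_image, Finset.mem_range]
    intro j
    have h1 : (0:ℤ) < (q j : ℤ) := by exact_mod_cast hq j
    have h2 : v j % (q j : ℤ) < (q j : ℤ) := Int.emod_lt_of_pos _ h1
    have h3 : (0:ℤ) ≤ v j % (q j : ℤ) := Int.emod_nonneg _ (by omega)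
    exact ⟨(v j % (q j : ℤ)).toNat, by omega, by omega⟩⟩

/-- The extension `u^x` of `u : ℂ^W` to `ℤ^d` satisfying `u^x_{n+m⊙q} = e^{2πi⟨m⊙q,x⟩}u_n`. -/
def extFn {d : ℕ} (q : Fin d → ℕ) (hq : ∀ j, 1 ≤ q j) (x : Fin d → ℝ)
    (u : {n // n ∈ Wcell q} → ℂ) (v : Fin d → ℤ) : ℂ :=
  Complex.exp (2 * Real.pi * Complex.I *
      ∑ j, ((((v j / (q j : ℤ)) * (q j : ℤ) : ℤ) : ℂ) * ((x j : ℝ) : ℂ))) *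
    u (modW q hq v)

/-- The Floquet restriction `H̃(x)` of `H = A + V` to `ℂ^W`. -/
def HtildeFn {d : ℕ} (q : Fin d → ℕ) (hq : ∀ j, 1 ≤ q j) (x : Fin d → ℝ)
    (a : (Fin d → ℤ) →₀ ℂ) (V : (Fin d → ℤ) → ℂ)
    (u : {n // n ∈ Wcell q} → ℂ) : {n // n ∈ Wcell q} → ℂ :=
  fun m => (Finsupp.sum a fun k c => c * extFn q hq x u (fun j => m.1 j - k j)) + V m.1 * u m

/-- The matrix of `H̃(x)` in the standard basis of `ℂ^W`. -/
def Hmat {d : ℕ} (q : Fin d → ℕ) (hq : ∀ j, 1 ≤ q j) (x : Fin d → ℝ)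
    (a : (Fin d → ℤ) →₀ ℂ) (V : (Fin d → ℤ) → ℂ) :
    Matrix {n // n ∈ Wcell q} {n // n ∈ Wcell q} ℂ :=
  fun m n => HtildeFn q hq x a V (Pi.single n 1) m

/-- The Floquet–Bloch transform matrix `ℱ^x`. -/
def Fmat {d : ℕ} (q : Fin d → ℕ) (x : Fin d → ℝ) :
    Matrix {n // n ∈ Wcell q} {n // n ∈ Wcell q} ℂ :=
  fun l n => ((1 / Real.sqrt (∏ j, (q j : ℝ)) : ℝ) : ℂ) *
    Complex.exp (-(2 * Real.pi * Complex.I) *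
      ∑ j, ((((l.1 j : ℝ) / (q j : ℝ) + x j : ℝ) : ℂ) * ((n.1 j : ℤ) : ℂ)))

/-- Numerical evaluation of the symbol `p(z) = Σ_n a_n z^{-n}`. -/
def pEvalN {d : ℕ} (a : (Fin d → ℤ) →₀ ℂ) (z : Fin d → ℂ) : ℂ :=
  Finsupp.sum a fun n c => c * ∏ j, z j ^ (-(n j))

/-- The numerical diagonal matrix `D^z`, `z = e^{2πix}`, with entries `p(μ_n ⊙ z)`. -/
def DmatN {d : ℕ} (q : Fin d → ℕ) (x : Fin d → ℝ) (a : (Fin d → ℤ) →₀ ℂ) :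
    Matrix {n // n ∈ Wcell q} {n // n ∈ Wcell q} ℂ :=
  Matrix.diagonal fun n => pEvalN a fun j =>
    muC (q j) (n.1 j) * Complex.exp (2 * Real.pi * Complex.I * ((x j : ℝ) : ℂ))

/-- The numerical matrix `B`. -/
def BmatN {d : ℕ} (q : Fin d → ℕ) (V : (Fin d → ℤ) → ℂ) :
    Matrix {n // n ∈ Wcell q} {n // n ∈ Wcell q} ℂ :=
  fun n n' => Vhat q V fun j => ((n.1 j - n'.1 j : ℤ) : ℝ) / (q j : ℝ)

/-- The symbol of the discrete Laplacian: `p(z) = -(Σ_j z_j + z_j⁻¹)`. -/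
def pLap (d : ℕ) : LMv d :=
  - ∑ j : Fin d, ((AddMonoidAlgebra.single (Finsupp.single j (1:ℤ)) (1:ℂ) : LMv d)
      + (AddMonoidAlgebra.single (Finsupp.single j (-1:ℤ)) (1:ℂ) : LMv d))

/-- The exponent vector `(a, b) ∈ ℤ²`. -/
def ee2 (a b : ℤ) : Fin 2 →₀ ℤ := Finsupp.single 0 a + Finsupp.single 1 b

/-- The monomial `z₁^a z₂^b`. -/
def mono2 (a b : ℤ) : LMv 2 := AddMonoidAlgebra.single (ee2 a b) (1:ℂ)

/-- The symbol of the extended Harper lattice Laplacian. -/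
def pEHM : LMv 2 :=
  -(mono2 1 0 + mono2 (-1) 0 + mono2 0 1 + mono2 0 (-1)
    + mono2 1 (-1) + mono2 (-1) 1 + mono2 1 1 + mono2 (-1) (-1))

/-- The symbol of the (sheared) triangular lattice Laplacian. -/
def pTri : LMv 2 :=
  -(mono2 1 0 + mono2 (-1) 0 + mono2 0 1 + mono2 0 (-1) + mono2 1 (-1) + mono2 (-1) 1)


namespace Stmt7Aux

open MvPolynomial

variable {d : ℕ}

/-- pointwise formula for `scaleZ`. -/
lemma coeff_ne_zero' {u : LMv d} (hu : u ≠ 0) : u.coeff ≠ 0 := fun h =>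
  hu (by rw [← AddMonoidAlgebra.ofCoeff_coeff u, h]; rfl)

lemma scaleZ_apply (c : Fin d → ℂ) (u : LMv d) (β : Fin d →₀ ℤ) :
    (scaleZ c u).coeff β = (∏ j, c j ^ (β j)) * u.coeff β := by
  classical
  rw [scaleZ, AddMonoidAlgebra.coeff_ofCoeff, Finsupp.sum_apply, Finsupp.sum]
  rw [Finset.sum_congr rfl fun α _ => Finsupp.single_apply]
  rw [Finset.sum_ite_eq' u.coeff.support β fun α => (∏ j, c j ^ (α j)) * u.coeff α]
  split_ifs with hmem
  · rfl
  · rw [Finsupp.notMem_support_iff.mp hmem, mul_zero]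

lemma muV_ne_zero (q : Fin d → ℕ) (n : Fin d → ℤ) (j : Fin d) : muV q n j ≠ 0 :=
  Complex.exp_ne_zero _

lemma support_scaleZ (c : Fin d → ℂ) (hc : ∀ j, c j ≠ 0) (u : LMv d) :
    (scaleZ c u).coeff.support = u.coeff.support := by
  ext β
  simp only [Finsupp.mem_support_iff, scaleZ_apply, mul_ne_zero_iff]
  constructor
  · exact fun h => h.2
  · intro h
    exact ⟨Finset.prod_ne_zero_iff.2 fun j _ => zpow_ne_zero _ (hc j), h⟩

lemma exists_lowDeg {p : LMv d} (hp : p ≠ 0) : ∃ α ∈ p.coeff.support, degS α = lowDeg p := by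
  classical
  have hs : (p.coeff.support.image degS).Nonempty :=
    (Finsupp.support_nonempty_iff.2 (coeff_ne_zero' hp)).image _
  have hmin : lowDeg p = (p.coeff.support.image degS).min' hs := by
    rw [lowDeg, ← Finset.coe_min' hs, WithTop.untopD_coe]
  obtain ⟨α, hα, hval⟩ := Finset.mem_image.mp (Finset.min'_mem _ hs)
  exact ⟨α, hα, by rw [hval, hmin]⟩

lemma lowComp_ne_zero {p : LMv d} (hp : p ≠ 0) : lowComp p ≠ 0 := by
  classical
  obtain ⟨α, hα, hdeg⟩ := exists_lowDeg hp
  intro h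
  have h0 : (lowComp p).coeff α = 0 := by rw [h]; rfl
  rw [lowComp, AddMonoidAlgebra.coeff_ofCoeff,
    Finsupp.filter_apply_pos (fun β => degS β = lowDeg p) p.coeff hdeg] at h0
  exact Finsupp.mem_support_iff.mp hα h0

lemma gammaV_eq {u : LMv d} (hu : u ≠ 0) (j : Fin d) :
    gammaV u j = max 0 (-((u.coeff.support.image fun α => α j).min'
      ((Finsupp.support_nonempty_iff.2 (coeff_ne_zero' hu)).image _))) := by
  classical
  have hs : ((u.coeff.support.image fun α => α j)).Nonempty :=
    (Finsupp.support_nonempty_iff.2 (coeff_ne_zero' hu)).image _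
  rw [gammaV, ← Finset.coe_min' hs, WithTop.untopD_coe]

lemma gammaV_add_nonneg {u : LMv d} (hu : u ≠ 0) {α : Fin d →₀ ℤ}
    (hα : α ∈ u.coeff.support) (j : Fin d) : 0 ≤ gammaV u j + α j := by
  classical
  have hs : ((u.coeff.support.image fun α => α j)).Nonempty :=
    (Finsupp.support_nonempty_iff.2 (coeff_ne_zero' hu)).image _
  have h1 : (u.coeff.support.image fun α => α j).min' hs ≤ α j :=
    Finset.min'_le _ _ (Finset.mem_image_of_mem _ hα)
  rw [gammaV_eq hu j]
  have h2 : -((u.coeff.support.image fun α => α j).min' hs) ≤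
      max 0 (-((u.coeff.support.image fun α => α j).min' hs)) := le_max_right _ _
  omega

lemma gammaV_attain {u : LMv d} (hu : u ≠ 0) {j : Fin d} (hj : 0 < gammaV u j) :
    ∃ α ∈ u.coeff.support, gammaV u j + α j = 0 := by
  classical
  have hs : ((u.coeff.support.image fun α => α j)).Nonempty :=
    (Finsupp.support_nonempty_iff.2 (coeff_ne_zero' hu)).image _
  obtain ⟨α, hα, hval⟩ := Finset.mem_image.mp (Finset.min'_mem _ hs)
  refine ⟨α, hα, ?_⟩
  rw [gammaV_eq hu j] at hj ⊢
  rw [hval]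
  omega

/-- exponent map. -/
def Enat (p : LMv d) (α : Fin d →₀ ℤ) : Fin d →₀ ℕ :=
  Finsupp.equivFunOnFinite.symm fun j => ((gammaE' p) j + α j).toNat

lemma gammaE'_apply (p : LMv d) (j : Fin d) : gammaE' p j = gammaV (lowComp p) j := rfl

lemma Enat_apply (p : LMv d) (α : Fin d →₀ ℤ) (j : Fin d) :
    Enat p α j = ((gammaE' p) j + α j).toNat := rfl

lemma Enat_injOn {p : LMv d} (hp : p ≠ 0) {α β : Fin d →₀ ℤ}
    (hα : α ∈ (lowComp p).coeff.support) (hβ : β ∈ (lowComp p).coeff.support)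
    (h : Enat p α = Enat p β) : α = β := by
  have hh := lowComp_ne_zero hp
  ext j
  have h1 : Enat p α j = Enat p β j := by rw [h]
  rw [Enat_apply, Enat_apply, gammaE'_apply] at h1
  have n1 := gammaV_add_nonneg hh hα j
  have n2 := gammaV_add_nonneg hh hβ j
  omega

def A0 (q : Fin d → ℕ) (p : LMv d) (n : Fin d → ℤ) : MvPolynomial (Fin d) ℂ :=
  Finsupp.sum (scaleZ (muV q n) (lowComp p)).coeff fun α c => monomial (Enat p α) c

def C0 (p : LMv d) : MvPolynomial (Fin d) ℂ := monomial (Enat p 0) 1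

lemma coeff_A0 (q : Fin d → ℕ) {p : LMv d} (hp : p ≠ 0) (n : Fin d → ℤ)
    {α : Fin d →₀ ℤ} (hα : α ∈ (lowComp p).coeff.support) :
    coeff (Enat p α) (A0 q p n) = (scaleZ (muV q n) (lowComp p)).coeff α := by
  classical
  have hsupp : (scaleZ (muV q n) (lowComp p)).coeff.support = (lowComp p).coeff.support :=
    support_scaleZ _ (muV_ne_zero q n) _
  rw [A0, Finsupp.sum, coeff_sum]
  rw [Finset.sum_eq_single_of_mem α (by rw [hsupp]; exact hα)]
  · rw [coeff_monomial, if_pos rfl]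
  · intro β hβ hne
    rw [coeff_monomial, if_neg]
    intro heq
    exact hne (Enat_injOn hp (hsupp ▸ hβ) hα heq)

end Stmt7Aux


namespace Stmt7Aux

open MvPolynomial

variable {d : ℕ}

lemma prime_X_mv (j : Fin d) : Prime (X j : MvPolynomial (Fin d) ℂ) := by
  classical
  let e := (renameEquiv ℂ (Equiv.optionSubtypeNe j).symm).trans
      (optionEquivLeft ℂ {b : Fin d // b ≠ j})
  rw [← MulEquiv.prime_iff e.toMulEquiv]
  have he : e.toMulEquiv (X j) = Polynomial.X := by
    show e (X j) = Polynomial.X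
    simp only [e, AlgEquiv.trans_apply, renameEquiv_apply, rename_X,
      Equiv.optionSubtypeNe_symm_self, optionEquivLeft_X_none]
  rw [he]
  exact Polynomial.prime_X

/-- the iso `S[X] ≃ ℂ[z,λ]` -/
def psi (d : ℕ) : Polynomial (MvPolynomial (Fin d) ℂ) ≃ₐ[ℂ] MvPolynomial (Fin d ⊕ Unit) ℂ :=
  (optionEquivLeft ℂ (Fin d)).symm.trans
    (renameEquiv ℂ (Equiv.optionEquivSumPUnit (Fin d)))

lemma psi_X : psi d Polynomial.X = X (Sum.inr ()) := by
  have h1 : (optionEquivLeft ℂ (Fin d)).symm Polynomial.X = X none := by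
    rw [AlgEquiv.symm_apply_eq, optionEquivLeft_X_none]
  simp [psi, h1]

lemma psi_C (s : MvPolynomial (Fin d) ℂ) :
    psi d (Polynomial.C s) = rename Sum.inl s := by
  have key : ((psi d : Polynomial (MvPolynomial (Fin d) ℂ) →+* MvPolynomial (Fin d ⊕ Unit) ℂ).comp
      (Polynomial.C : MvPolynomial (Fin d) ℂ →+* Polynomial (MvPolynomial (Fin d) ℂ)))
      = (rename (R := ℂ) (Sum.inl : Fin d → Fin d ⊕ Unit)).toRingHom := by
    apply MvPolynomial.ringHom_ext
    · intro c
      have h1 : (optionEquivLeft ℂ (Fin d)).symm (Polynomial.C (C c)) = C c := by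
        rw [AlgEquiv.symm_apply_eq, optionEquivLeft_C]
      simp [psi, h1]
    · intro i
      have h1 : (optionEquivLeft ℂ (Fin d)).symm (Polynomial.C (X i)) = X (some i) := by
        rw [AlgEquiv.symm_apply_eq, optionEquivLeft_X_some]
      simp [psi, h1]
  exact RingHom.congr_fun key s

lemma single_one_mul (β₀ : (Fin d →₀ ℤ) × ℤ) (P : LMvF d) :
    (AddMonoidAlgebra.single β₀ (1:ℂ)) * P
      = AddMonoidAlgebra.ofCoeff (Finsupp.mapDomain (fun β => β₀ + β) P.coeff) := by
  induction P using AddMonoidAlgebra.induction_linear with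
  | zero => simp
  | add f g hf hg => rw [mul_add, hf, hg, AddMonoidAlgebra.coeff_add, Finsupp.mapDomain_add]; rfl
  | single a b =>
      rw [AddMonoidAlgebra.coeff_single, Finsupp.mapDomain_single, AddMonoidAlgebra.ofCoeff_single]
      have := AddMonoidAlgebra.single_mul_single (R := ℂ) (M := (Fin d →₀ ℤ) × ℤ)
        (m₁ := β₀) (r₁ := 1) (m₂ := a) (r₂ := b)
      rw [one_mul] at this
      exact this

/-- the exponent translation used in `toMvP`. -/
def Tmap (β : (Fin d →₀ ℤ) × ℤ) : (Fin d ⊕ Unit) →₀ ℕ :=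
  Finsupp.equivFunOnFinite.symm
    (Sum.elim (fun j => (β.1 j).toNat) (fun _ => β.2.toNat))

lemma toMvP_eq_sum (P : LMvF d) :
    toMvP P = Finsupp.sum P.coeff fun β c => monomial (Tmap β) c := rfl

lemma exponent_eq (p : LMv d) (α : Fin d →₀ ℤ) :
    Tmap ((gammaE' p, (0:ℤ)) + (α, (0:ℤ))) = (Enat p α).mapDomain Sum.inl := by
  classical
  ext x
  cases x with
  | inl j =>
      rw [Finsupp.mapDomain_apply Sum.inl_injective]
      show (((gammaE' p + α) : Fin d →₀ ℤ) j).toNat = Enat p α j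
      rw [Enat_apply, Finsupp.add_apply]
  | inr u =>
      rw [Finsupp.mapDomain_notin_range _ _ (by simp)]
      show ((0:ℤ) + (0:ℤ)).toNat = 0
      simp

lemma toMvP_single_mul (q : Fin d → ℕ) (p : LMv d) (n : Fin d → ℤ) :
    toMvP ((AddMonoidAlgebra.single (gammaE' p, (0:ℤ)) (1:ℂ) : LMvF d)
        * embedZ (scaleZ (muV q n) (lowComp p)))
      = rename Sum.inl (A0 q p n) := by
  classical
  rw [embedZ, single_one_mul, toMvP_eq_sum]
  simp only [AddMonoidAlgebra.coeff_ofCoeff]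
  rw [← Finsupp.mapDomain_comp]
  rw [Finsupp.sum_mapDomain_index (fun β => by simp)
    (fun β m₁ m₂ => by rw [(monomial (Tmap β)).map_add])]
  rw [A0, map_finsuppSum]
  refine Finsupp.sum_congr fun α _ => ?_
  rw [rename_monomial]
  exact congrArg (fun e => monomial e _) (exponent_eq p α)

lemma toMvP_single (p : LMv d) :
    toMvP (AddMonoidAlgebra.ofCoeff (Finsupp.single (gammaE' p, (0:ℤ)) (1:ℂ)) : LMvF d)
      = rename Sum.inl (C0 p) := by
  rw [toMvP_eq_sum, AddMonoidAlgebra.coeff_ofCoeff, Finsupp.sum_single_index (by simp)]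
  rw [C0, rename_monomial]
  have h2 := exponent_eq p 0
  rw [show ((gammaE' p, (0:ℤ)) + ((0 : Fin d →₀ ℤ), (0:ℤ))) = (gammaE' p, (0:ℤ)) by simp] at h2
  exact congrArg (fun e => monomial e _) h2

lemma rPoly_eq (q : Fin d → ℕ) (p : LMv d) (n : Fin d → ℤ) :
    rPoly q p n = psi d (Polynomial.C (A0 q p n) * Polynomial.X - Polynomial.C (C0 p)) := by
  rw [map_sub, map_mul, psi_C, psi_X, psi_C, rPoly, toMvP_single_mul, toMvP_single, mul_comm]

end Stmt7Aux


section LinAux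


lemma linRelPrime {S : Type*} [CommRing S] [IsDomain S] (A B C : S)
    (hC : C ≠ 0) (hAB : A ≠ B)
    (hAC : ∀ f : S, f ∣ A → f ∣ C → IsUnit f) :
    IsRelPrime (Polynomial.C A * Polynomial.X - Polynomial.C C)
      (Polynomial.C B * Polynomial.X - Polynomial.C C) := by
  intro f hfA hfB
  have hAne : (Polynomial.C A * Polynomial.X - Polynomial.C C) ≠ 0 := by
    intro h
    have := congrArg (fun r => Polynomial.coeff r 0) h
    simp at this
    exact hC this
  have hBne : (Polynomial.C B * Polynomial.X - Polynomial.C C) ≠ 0 := by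
    intro h
    have := congrArg (fun r => Polynomial.coeff r 0) h
    simp at this
    exact hC this
  have hdA : (Polynomial.C A * Polynomial.X - Polynomial.C C).natDegree ≤ 1 := by
    refine le_trans (Polynomial.natDegree_sub_le _ _) ?_
    simp [Polynomial.natDegree_C_mul_le, Polynomial.natDegree_C]
    exact le_trans (Polynomial.natDegree_C_mul_le _ _) (by simp)
  have hdB : (Polynomial.C B * Polynomial.X - Polynomial.C C).natDegree ≤ 1 := by
    refine le_trans (Polynomial.natDegree_sub_le _ _) ?_
    simp [Polynomial.natDegree_C]
    exact le_trans (Polynomial.natDegree_C_mul_le _ _) (by simp)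
  obtain ⟨g, hg⟩ := hfA
  obtain ⟨g', hg'⟩ := hfB
  have hf0 : f ≠ 0 := by rintro rfl; simp at hg; exact hAne hg
  have hg0 : g ≠ 0 := by rintro rfl; simp at hg; exact hAne hg
  have hg'0 : g' ≠ 0 := by rintro rfl; simp at hg'; exact hBne hg'
  rcases Nat.eq_zero_or_pos f.natDegree with h0 | h1
  · obtain ⟨c, rfl⟩ := Polynomial.natDegree_eq_zero.mp h0
    have hdvd : ∀ i, c ∣ (Polynomial.C A * Polynomial.X - Polynomial.C C).coeff i :=
      (Polynomial.C_dvd_iff_dvd_coeff c _).mp ⟨g, hg⟩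
    have h1 := hdvd 1
    have h2 := hdvd 0
    simp at h1 h2
    rw [Polynomial.isUnit_C]
    exact hAC c h1 h2
  · -- natDegree f = 1, cofactors constants
    have hsum : f.natDegree + g.natDegree ≤ 1 := by
      rw [← Polynomial.natDegree_mul hf0 hg0, ← hg]; exact hdA
    have hsum' : f.natDegree + g'.natDegree ≤ 1 := by
      rw [← Polynomial.natDegree_mul hf0 hg'0, ← hg']; exact hdB
    have hfd : f.natDegree = 1 := by omega
    have hgd : g.natDegree = 0 := by omega
    have hg'd : g'.natDegree = 0 := by omega
    obtain ⟨c, rfl⟩ := Polynomial.natDegree_eq_zero.mp hgd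
    obtain ⟨c', rfl⟩ := Polynomial.natDegree_eq_zero.mp hg'd
    have e0 : f.coeff 0 * c = -C := by
      have := congrArg (fun r => Polynomial.coeff r 0) hg
      simpa [Polynomial.coeff_mul_C] using this.symm
    have e0' : f.coeff 0 * c' = -C := by
      have := congrArg (fun r => Polynomial.coeff r 0) hg'
      simpa [Polynomial.coeff_mul_C] using this.symm
    have e1 : f.coeff 1 * c = A := by
      have := congrArg (fun r => Polynomial.coeff r 1) hg
      simpa [Polynomial.coeff_mul_C] using this.symm
    have e1' : f.coeff 1 * c' = B := by
      have := congrArg (fun r => Polynomial.coeff r 1) hg'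
      simpa [Polynomial.coeff_mul_C] using this.symm
    have hc0 : f.coeff 0 ≠ 0 := by
      intro h; rw [h, zero_mul] at e0; exact hC (neg_eq_zero.mp e0.symm)
    have hcc : c = c' := by
      have := e0.trans e0'.symm
      exact mul_left_cancel₀ hc0 this
    rw [hcc] at e1
    exact absurd (e1.symm.trans e1') hAB

lemma relPrime_map {R S : Type*} [CommRing R] [CommRing S] (e : R ≃+* S) {x y : R}
    (h : IsRelPrime x y) : IsRelPrime (e x) (e y) := by
  intro f hf1 hf2
  have h1 : e.symm f ∣ x := by
    have := map_dvd e.symm hf1; simpa using this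
  have h2 : e.symm f ∣ y := by
    have := map_dvd e.symm hf2; simpa using this
  have := h h1 h2
  have := this.map (e : R →* S)
  simpa using this

end LinAux

namespace Stmt7Aux

open MvPolynomial

variable {d : ℕ}

lemma C0_ne_zero (p : LMv d) : C0 p ≠ 0 := by
  rw [C0, Ne, monomial_eq_zero]
  exact one_ne_zero

lemma A0_ne (q : Fin d → ℕ) {p : LMv d} (hp : p ≠ 0) {n n' : Fin d → ℤ}
    (hne : scaleZ (muV q n) (lowComp p) ≠ scaleZ (muV q n') (lowComp p)) :
    A0 q p n ≠ A0 q p n' := by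
  have hne' : (scaleZ (muV q n) (lowComp p)).coeff ≠ (scaleZ (muV q n') (lowComp p)).coeff :=
    fun h => hne (AddMonoidAlgebra.coeff_injective h)
  obtain ⟨α, hα⟩ := Finsupp.ne_iff.mp hne'
  have hsupp : (scaleZ (muV q n) (lowComp p)).coeff.support = (lowComp p).coeff.support :=
    support_scaleZ _ (muV_ne_zero q n) _
  have hsupp' : (scaleZ (muV q n') (lowComp p)).coeff.support = (lowComp p).coeff.support :=
    support_scaleZ _ (muV_ne_zero q n') _
  have hαmem : α ∈ (lowComp p).coeff.support := by
    by_cases h1 : (scaleZ (muV q n) (lowComp p)).coeff α = 0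
    · have h2 : (scaleZ (muV q n') (lowComp p)).coeff α ≠ 0 := fun h => hα (h1.trans h.symm)
      rw [← hsupp']; exact Finsupp.mem_support_iff.2 h2
    · rw [← hsupp]; exact Finsupp.mem_support_iff.2 h1
  intro h
  apply hα
  rw [← coeff_A0 q hp n hαmem, ← coeff_A0 q hp n' hαmem, h]

lemma relPrime_A0_C0 (q : Fin d → ℕ) {p : LMv d} (hp : p ≠ 0) (n : Fin d → ℤ) :
    ∀ f : MvPolynomial (Fin d) ℂ, f ∣ A0 q p n → f ∣ C0 p → IsUnit f := by
  classical
  intro f hfA hfC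
  by_contra hnu
  have hf0 : f ≠ 0 := by
    rintro rfl
    exact C0_ne_zero p (zero_dvd_iff.mp hfC)
  obtain ⟨π, hπirr, hπf⟩ := WfDvdMonoid.exists_irreducible_factor hnu hf0
  have hπ : Prime π := UniqueFactorizationMonoid.irreducible_iff_prime.1 hπirr
  have hπC : π ∣ C0 p := hπf.trans hfC
  rw [C0, monomial_eq, C_1, one_mul, Finsupp.prod] at hπC
  obtain ⟨j, hjmem, hjdvd⟩ := hπ.exists_mem_finset_dvd hπC
  have hπX : π ∣ X j := hπ.dvd_of_dvd_pow hjdvd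
  have hassoc : Associated π (X j) :=
    hπirr.associated_of_dvd (prime_X_mv j).irreducible hπX
  have hXA : (X j : MvPolynomial (Fin d) ℂ) ∣ A0 q p n :=
    hassoc.symm.dvd.trans (hπf.trans hfA)
  -- j has positive gamma exponent
  have hγ : 0 < gammaV (lowComp p) j := by
    have := Finsupp.mem_support_iff.mp hjmem
    rw [Enat_apply, gammaE'_apply] at this
    simp only [Finsupp.coe_zero, Pi.zero_apply, add_zero] at this
    omega
  obtain ⟨α, hαmem, hα0⟩ := gammaV_attain (lowComp_ne_zero hp) hγ
  -- coefficient of A0 at Enat p α is nonzero but j-component of Enat p α is zero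
  have hcoeff : coeff (Enat p α) (A0 q p n) ≠ 0 := by
    rw [coeff_A0 q hp n hαmem]
    have hsupp : (scaleZ (muV q n) (lowComp p)).coeff.support = (lowComp p).coeff.support :=
      support_scaleZ _ (muV_ne_zero q n) _
    exact Finsupp.mem_support_iff.mp (by rw [hsupp]; exact hαmem)
  obtain ⟨B, hB⟩ := hXA
  have hnotmem : j ∉ (Enat p α).support := by
    rw [Finsupp.notMem_support_iff, Enat_apply, gammaE'_apply, hα0]
    rfl
  rw [hB, coeff_X_mul', if_neg hnotmem] at hcoeff
  exact hcoeff rfl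

end Stmt7Aux

theorem stmt7 {d : ℕ} (hd : 1 ≤ d) (q : Fin d → ℕ) (hq : ∀ j, 1 ≤ q j)
    (p : LMv d) (hp : p ≠ 0)
    (hA2 : PairwiseDistinctH q (lowComp p)) :
    ∀ n ∈ Wcell q, ∀ n' ∈ Wcell q, n ≠ n' →
      IsRelPrime (rPoly q p n) (rPoly q p n') := by
  intro n hn n' hn' hne
  have hscale := hA2 n hn n' hn' hne
  rw [Stmt7Aux.rPoly_eq q p n, Stmt7Aux.rPoly_eq q p n']
  exact relPrime_map (Stmt7Aux.psi d).toRingEquiv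
    (linRelPrime _ _ _ (Stmt7Aux.C0_ne_zero p) (Stmt7Aux.A0_ne q hp hscale)
      (Stmt7Aux.relPrime_A0_C0 q hp n))
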